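/- The specialized Vámos polynomial h₄ is hyperbolic with respect to e = (1,1,0,0), i.e., h₄(e) ≠ 0 and for every v ∈ ℝ⁴ the univariate polynomial t ↦ h₄(t·e + v) has only real roots. -/

import Mathlib

open MvPolynomial Polynomial Matrix

noncomputable def univPoly {n : ℕ} (h : MvPolynomial (Fin n) ℝ) (e v : Fin n → ℝ) : Polynomial ℝ :=
  MvPolynomial.aeval (fun i => Polynomial.C (v i) + Polynomial.C (e i) * Polynomial.X) h

def RealRooted (p : Polynomial ℝ) : Prop :=
  ∀ z : ℂ, (p.map (algebraMap ℝ ℂ)).IsRoot z → z.im = 0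

def Hyperbolic {n : ℕ} (h : MvPolynomial (Fin n) ℝ) (e : Fin n → ℝ) : Prop :=
  MvPolynomial.eval e h ≠ 0 ∧ ∀ v : Fin n → ℝ, RealRooted (univPoly h e v)

def hypCone {n : ℕ} (h : MvPolynomial (Fin n) ℝ) (e : Fin n → ℝ) : Set (Fin n → ℝ) :=
  {v | ∀ t : ℝ, (univPoly h e v).IsRoot t → t ≤ 0}

noncomputable def h4 : MvPolynomial (Fin 4) ℝ :=
  X 0 ^ 2 * X 1 ^ 2 + 4 * (X 0 + X 1 + X 2 + X 3) *
    (X 0 * X 1 * X 2 + X 0 * X 1 * X 3 + X 0 * X 2 * X 3 + X 1 * X 2 * X 3)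

noncomputable def e4 : Fin 4 → ℝ := ![1, 1, 0, 0]

set_option maxHeartbeats 1600000

section Aux
open Complex

lemma quad_real (b c : ℝ) (hd : 0 ≤ b^2 - 4*c) (z : ℂ)
    (hz : z^2 + (b:ℂ)*z + (c:ℂ) = 0) : z.im = 0 := by
  have hr2 : (Real.sqrt (b^2-4*c))^2 = b^2 - 4*c := Real.sq_sqrt hd
  set r := Real.sqrt (b^2 - 4*c) with hr
  have hrc : (r:ℂ)^2 = (b:ℂ)^2 - 4*(c:ℂ) := by exact_mod_cast congrArg (Complex.ofReal ·) hr2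
  have hfac : (z - (((-b+r)/2 : ℝ) : ℂ)) * (z - (((-b-r)/2 : ℝ) : ℂ)) = 0 := by
    push_cast
    linear_combination hz - (1/4) * hrc
  rcases mul_eq_zero.mp hfac with h | h <;>
    rw [sub_eq_zero] at h <;> rw [h] <;> exact Complex.ofReal_im _

lemma ypos (y : ℝ) (hy : y ≠ 0) : 0 < y^2 := by
  rcases lt_or_gt_of_ne hy with h | h <;> nlinarith

lemma cubic_crit (c2 c1 c0 x1 x2 : ℝ) (h12 : x1 < x2)
    (H1 : 0 ≤ x1^3 + c2*x1^2 + c1*x1 + c0)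
    (H2 : x2^3 + c2*x2^2 + c1*x2 + c0 ≤ 0)
    (z : ℂ) (hz : z^3 + (c2:ℂ)*z^2 + (c1:ℂ)*z + (c0:ℂ) = 0) : z.im = 0 := by
  by_contra hy
  have hsub : z - (z.re:ℂ) = (z.im:ℂ)*Complex.I := by
    apply Complex.ext <;> simp
  have hsq := congrArg (·^2) hsub
  have hI : (Complex.I)^2 = -1 := Complex.I_sq
  have hD : z^2 - 2*(z.re:ℂ)*z + ((z.re:ℂ)^2+(z.im:ℂ)^2) = 0 := by
    linear_combination hsq + (z.im:ℂ)^2 * hI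
  have hrem : ((c1 - (z.re^2+z.im^2) + 2*(c2+2*z.re)*z.re : ℝ):ℂ)*z
      + ((c0 - (c2+2*z.re)*(z.re^2+z.im^2) : ℝ):ℂ) = 0 := by
    push_cast
    linear_combination hz - (z + ((c2:ℂ) + 2*(z.re:ℂ))) * hD
  have him : (c1 - (z.re^2+z.im^2) + 2*(c2+2*z.re)*z.re) * z.im = 0 := by
    have h := congrArg Complex.im hrem
    simpa [← Complex.ofReal_pow] using h
  have hL : c1 - (z.re^2+z.im^2) + 2*(c2+2*z.re)*z.re = 0 := by
    rcases mul_eq_zero.mp him with h | h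
    · exact h
    · exact absurd h hy
  have hM : c0 - (c2+2*z.re)*(z.re^2+z.im^2) = 0 := by
    have h := congrArg Complex.re hrem
    simp [hL, ← Complex.ofReal_pow] at h
    exact h
  have hQ : ∀ t : ℝ, t^3 + c2*t^2 + c1*t + c0 = ((t-z.re)^2+z.im^2)*(t+(c2+2*z.re)) := by
    intro t
    linear_combination (t : ℝ) * hL + hM
  have d1 : 0 < (x1-z.re)^2+z.im^2 := by nlinarith [ypos z.im hy, sq_nonneg (x1-z.re)]
  have d2 : 0 < (x2-z.re)^2+z.im^2 := by nlinarith [ypos z.im hy, sq_nonneg (x2-z.re)]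
  rw [hQ x1] at H1
  rw [hQ x2] at H2
  have hb1 : 0 ≤ x1 + (c2+2*z.re) := by
    by_contra h; push_neg at h
    nlinarith [mul_pos d1 (by linarith : (0:ℝ) < -(x1+(c2+2*z.re)))]
  have hb2 : x2 + (c2+2*z.re) ≤ 0 := by
    by_contra h; push_neg at h
    nlinarith [mul_pos d2 h]
  linarith

lemma quart_crit (c3 c2 c1 c0 x1 x2 x3 : ℝ) (h12 : x1 < x2) (h23 : x2 < x3)
    (H1 : x1^4 + c3*x1^3 + c2*x1^2 + c1*x1 + c0 ≤ 0)
    (H2 : 0 < x2^4 + c3*x2^3 + c2*x2^2 + c1*x2 + c0)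
    (H3 : x3^4 + c3*x3^3 + c2*x3^2 + c1*x3 + c0 ≤ 0)
    (z : ℂ) (hz : z^4 + (c3:ℂ)*z^3 + (c2:ℂ)*z^2 + (c1:ℂ)*z + (c0:ℂ) = 0) : z.im = 0 := by
  by_contra hy
  have hsub : z - (z.re:ℂ) = (z.im:ℂ)*Complex.I := by
    apply Complex.ext <;> simp
  have hsq := congrArg (·^2) hsub
  have hI : (Complex.I)^2 = -1 := Complex.I_sq
  have hD : z^2 - 2*(z.re:ℂ)*z + ((z.re:ℂ)^2+(z.im:ℂ)^2) = 0 := by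
    linear_combination hsq + (z.im:ℂ)^2 * hI
  have hrem : ((c1 + 2*(c2 + 2*(c3+2*z.re)*z.re - (z.re^2+z.im^2))*z.re
        - (c3+2*z.re)*(z.re^2+z.im^2) : ℝ):ℂ)*z
      + ((c0 - (c2 + 2*(c3+2*z.re)*z.re - (z.re^2+z.im^2))*(z.re^2+z.im^2) : ℝ):ℂ) = 0 := by
    push_cast
    linear_combination hz - (z^2 + ((c3:ℂ)+2*(z.re:ℂ))*z
      + ((c2:ℂ) + 2*((c3:ℂ)+2*(z.re:ℂ))*(z.re:ℂ) - ((z.re:ℂ)^2+(z.im:ℂ)^2))) * hD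
  have him : (c1 + 2*(c2 + 2*(c3+2*z.re)*z.re - (z.re^2+z.im^2))*z.re
      - (c3+2*z.re)*(z.re^2+z.im^2)) * z.im = 0 := by
    have h := congrArg Complex.im hrem
    simpa [← Complex.ofReal_pow] using h
  have hL : c1 + 2*(c2 + 2*(c3+2*z.re)*z.re - (z.re^2+z.im^2))*z.re
      - (c3+2*z.re)*(z.re^2+z.im^2) = 0 := by
    rcases mul_eq_zero.mp him with h | h
    · exact h
    · exact absurd h hy
  have hM : c0 - (c2 + 2*(c3+2*z.re)*z.re - (z.re^2+z.im^2))*(z.re^2+z.im^2) = 0 := by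
    have h := congrArg Complex.re hrem
    simp [hL, ← Complex.ofReal_pow] at h
    exact h
  have hQ : ∀ t : ℝ, t^4 + c3*t^3 + c2*t^2 + c1*t + c0
      = ((t-z.re)^2+z.im^2)*(t^2+(c3+2*z.re)*t+(c2 + 2*(c3+2*z.re)*z.re - (z.re^2+z.im^2))) := by
    intro t
    linear_combination (t : ℝ) * hL + hM
  set b : ℝ := c3+2*z.re with hbd
  set c : ℝ := c2 + 2*(c3+2*z.re)*z.re - (z.re^2+z.im^2) with hcd
  have d1 : 0 < (x1-z.re)^2+z.im^2 := by nlinarith [ypos z.im hy, sq_nonneg (x1-z.re)]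
  have d2 : 0 < (x2-z.re)^2+z.im^2 := by nlinarith [ypos z.im hy, sq_nonneg (x2-z.re)]
  have d3 : 0 < (x3-z.re)^2+z.im^2 := by nlinarith [ypos z.im hy, sq_nonneg (x3-z.re)]
  rw [hQ x1] at H1
  rw [hQ x2] at H2
  rw [hQ x3] at H3
  have hr1 : x1^2 + b*x1 + c ≤ 0 := by
    by_contra h; push_neg at h
    nlinarith [mul_pos d1 h]
  have hr3 : x3^2 + b*x3 + c ≤ 0 := by
    by_contra h; push_neg at h
    nlinarith [mul_pos d3 h]
  have hr2 : 0 < x2^2 + b*x2 + c := by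
    by_contra h; push_neg at h
    nlinarith [mul_nonneg (le_of_lt d2) (by linarith : (0:ℝ) ≤ -(x2^2+b*x2+c))]
  have key : (x2-x1)*(x3^2+b*x3+c) + (x3-x2)*(x1^2+b*x1+c) - (x3-x1)*(x2^2+b*x2+c)
      = (x3-x1)*(x2-x1)*(x3-x2) := by ring
  nlinarith [mul_nonneg (by linarith : (0:ℝ) ≤ x2-x1) (neg_nonneg.mpr hr3),
             mul_nonneg (by linarith : (0:ℝ) ≤ x3-x2) (neg_nonneg.mpr hr1),
             mul_pos (by linarith : (0:ℝ) < x3-x1) hr2,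
             mul_pos (mul_pos (by linarith : (0:ℝ) < x3-x1) (by linarith : (0:ℝ) < x2-x1)) (by linarith : (0:ℝ) < x3-x2)]

lemma master (m σ p : ℝ) (hm : 0 ≤ m) (hs : 0 ≤ σ) (hd : 4*p ≤ σ^2) (z : ℂ)
    (hz : z^4 + ((8*σ : ℝ):ℂ)*z^3 + ((4*σ^2+16*p-2*m^2 : ℝ):ℂ)*z^2
      + ((8*p*σ-8*σ*m^2 : ℝ):ℂ)*z + ((m^4-4*σ^2*m^2 : ℝ):ℂ) = 0) : z.im = 0 := by
  rcases eq_or_lt_of_le hm with hm0 | hm'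
  · -- m = 0
    have hm2 : ((m:ℝ):ℂ)^2 = 0 := by
      rw [← hm0]; norm_num
    have hfac : z * (z^3 + ((8*σ:ℝ):ℂ)*z^2 + ((4*σ^2+16*p:ℝ):ℂ)*z + ((8*p*σ:ℝ):ℂ)) = 0 := by
      push_cast at hz ⊢
      push_cast at hm2
      linear_combination hz - ((m:ℂ)^2 - 2*z^2 - 8*(σ:ℂ)*z - 4*(σ:ℂ)^2) * hm2
    rcases mul_eq_zero.mp hfac with h | h
    · rw [h]; rfl
    · rcases eq_or_lt_of_le hs with hσ0 | hσ'
      · -- σ = 0 : cubic is z^3 + 16 p z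
        have hσc : ((σ:ℝ):ℂ) = 0 := by rw [← hσ0]; norm_num
        have hq : z * (z^2 + ((0:ℝ):ℂ)*z + ((16*p:ℝ):ℂ)) = 0 := by
          push_cast at h ⊢
          linear_combination h - (8*z^2 + 4*(σ:ℂ)*z + 8*(p:ℂ))*hσc
        rcases mul_eq_zero.mp hq with h2 | h2
        · rw [h2]; rfl
        · exact quad_real 0 (16*p) (by nlinarith) z h2
      · -- σ > 0
        refine cubic_crit (8*σ) (4*σ^2+16*p) (8*p*σ) (-(2*σ)) (-(σ/2)) (by linarith) ?_ ?_ z h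
        · nlinarith [mul_pos hσ' hσ', mul_le_mul_of_nonneg_right hd hσ'.le]
        · nlinarith [mul_pos (mul_pos hσ' hσ') hσ']
  · -- m > 0
    rcases lt_trichotomy p 0 with hp | hp | hp
    · -- p < 0
      rcases lt_trichotomy σ (2*m) with hσm | hσm | hσm
      · -- σ < 2m : points -m, -σ/2, m
        refine quart_crit _ _ _ _ (-m) (-(σ/2)) m (by linarith) (by linarith) ?_ ?_ ?_ z hz
        · nlinarith [mul_pos (mul_pos hm' (show (0:ℝ) < 2*m-σ by linarith)) (show (0:ℝ) < -p by linarith)]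
        · have h1 : 0 < m^2 - σ^2/4 := by nlinarith
          nlinarith [mul_pos h1 h1]
        · nlinarith [mul_pos (mul_pos hm' (show (0:ℝ) < 2*m+σ by linarith)) (show (0:ℝ) < -p by linarith)]
      · -- σ = 2m : factor (z+m) * cubic
        have hσc : ((σ:ℝ):ℂ) = 2*(m:ℝ) := by exact_mod_cast congrArg (Complex.ofReal ·) hσm
        have hfac : (z + (m:ℂ)) * (z^3 + ((15*m:ℝ):ℂ)*z^2 + ((16*p-m^2:ℝ):ℂ)*z + ((-15*m^3:ℝ):ℂ)) = 0 := by
          push_cast at hz hσc ⊢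
          linear_combination hz - (8*z^3 + 4*((σ:ℂ)+2*(m:ℂ))*z^2 + (8*(p:ℂ)-8*(m:ℂ)^2)*z - 4*(m:ℂ)^2*((σ:ℂ)+2*(m:ℂ))) * hσc
        rcases mul_eq_zero.mp hfac with h | h
        · have : z = -(m:ℂ) := by linear_combination h
          rw [this]; simp
        · refine cubic_crit (15*m) (16*p-m^2) (-15*m^3) (-m) m (by linarith) ?_ ?_ z h
          · nlinarith [mul_pos hm' (show (0:ℝ) < -p by linarith)]
          · nlinarith [mul_pos hm' (show (0:ℝ) < -p by linarith)]
      · -- σ > 2m : points -σ, -m, m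
        refine quart_crit _ _ _ _ (-σ) (-m) m (by linarith) (by linarith) ?_ ?_ ?_ z hz
        · have hσ'2 : (0:ℝ) < σ := by linarith
          have h1 : 0 < σ^2 - m^2 := by nlinarith
          have h3 : 0 < 3*σ^2 + m^2 := by nlinarith
          nlinarith [mul_pos h1 h3, mul_pos (show (0:ℝ) < -p by linarith) (mul_pos hσ'2 hσ'2)]
        · nlinarith [mul_pos (mul_pos hm' (show (0:ℝ) < σ-2*m by linarith)) (show (0:ℝ) < -p by linarith)]
        · nlinarith [mul_pos (mul_pos hm' (show (0:ℝ) < 2*m+σ by linarith)) (show (0:ℝ) < -p by linarith)]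
    · -- p = 0 : product of two quadratics
      have hpc : ((p:ℝ):ℂ) = 0 := by exact_mod_cast congrArg (Complex.ofReal ·) hp
      have hfac : (z^2 + ((0:ℝ):ℂ)*z + ((-m^2:ℝ):ℂ)) * (z^2 + ((8*σ:ℝ):ℂ)*z + ((4*σ^2-m^2:ℝ):ℂ)) = 0 := by
        push_cast at hz hpc ⊢
        linear_combination hz - (16*z^2 + 8*(σ:ℂ)*z) * hpc
      rcases mul_eq_zero.mp hfac with h | h
      · exact quad_real 0 (-m^2) (by nlinarith) z h
      · exact quad_real (8*σ) (4*σ^2-m^2) (by nlinarith) z h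
    · -- p > 0 ; then σ > 0
      have hσ' : 0 < σ := by
        rcases eq_or_lt_of_le hs with h0 | h0
        · exfalso; nlinarith
        · exact h0
      rcases lt_trichotomy σ (2*m) with hσm | hσm | hσm
      · -- σ < 2m : points -σ/2-m, -m, -σ/2+m
        have k1 : 8*p*m*(2*m+σ) ≤ 2*σ^2*m*(2*m+σ) := by
          nlinarith [mul_nonneg (mul_nonneg hm'.le (show (0:ℝ) ≤ 2*m+σ by linarith)) (show (0:ℝ) ≤ σ^2-4*p by linarith)]
        have k2 : (σ^2/4)*(2*m+σ/2)^2 - 4*m*σ^2*(2*m+σ/2) + 2*σ^2*m*(2*m+σ) ≤ 0 := by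
          have h4 : 2*m*σ ≤ 4*m^2 := by nlinarith
          have h5 : σ^2 ≤ 4*m^2 := by nlinarith
          nlinarith [mul_nonneg (sq_nonneg σ) (show (0:ℝ) ≤ 12*m^2-2*m*σ-σ^2/4 by nlinarith)]
        have k1' : 8*p*m*(2*m-σ) ≤ 2*σ^2*m*(2*m-σ) := by
          nlinarith [mul_nonneg (mul_nonneg hm'.le (show (0:ℝ) ≤ 2*m-σ by linarith)) (show (0:ℝ) ≤ σ^2-4*p by linarith)]
        have k2' : (σ^2/4)*(2*m-σ/2)^2 - 4*m*σ^2*(2*m-σ/2) + 2*σ^2*m*(2*m-σ) ≤ 0 := by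
          have h4 : 0 ≤ 2*m*σ := by nlinarith
          have h5 : σ^2 ≤ 4*m^2 := by nlinarith
          nlinarith [mul_nonneg (sq_nonneg σ) (show (0:ℝ) ≤ 12*m^2+2*m*σ-σ^2/4 by nlinarith)]
        refine quart_crit _ _ _ _ (-(σ/2)-m) (-m) (-(σ/2)+m) (by linarith) (by linarith) ?_ ?_ ?_ z hz
        · nlinarith [k1, k2]
        · nlinarith [mul_pos (mul_pos hm' (show (0:ℝ) < 2*m-σ by linarith)) hp]
        · nlinarith [k1', k2']
      · -- σ = 2m : factor
        have hσc : ((σ:ℝ):ℂ) = 2*(m:ℝ) := by exact_mod_cast congrArg (Complex.ofReal ·) hσm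
        have hfac : (z + (m:ℂ)) * (z^3 + ((15*m:ℝ):ℂ)*z^2 + ((16*p-m^2:ℝ):ℂ)*z + ((-15*m^3:ℝ):ℂ)) = 0 := by
          push_cast at hz hσc ⊢
          linear_combination hz - (8*z^3 + 4*((σ:ℂ)+2*(m:ℂ))*z^2 + (8*(p:ℂ)-8*(m:ℂ)^2)*z - 4*(m:ℂ)^2*((σ:ℂ)+2*(m:ℂ))) * hσc
        rcases mul_eq_zero.mp hfac with h | h
        · have : z = -(m:ℂ) := by linear_combination h
          rw [this]; simp
        · refine cubic_crit (15*m) (16*p-m^2) (-15*m^3) (-(4*m)) (-m) (by linarith) ?_ ?_ z h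
          · have hpm : p ≤ m^2 := by nlinarith
            nlinarith [mul_pos (mul_pos hm' hm') hm', mul_le_mul_of_nonneg_right hpm hm'.le]
          · nlinarith [mul_pos hm' hp]
      · -- σ > 2m : points -σ, -σ/2, -m
        refine quart_crit _ _ _ _ (-σ) (-(σ/2)) (-m) (by linarith) (by linarith) ?_ ?_ ?_ z hz
        · have h5 : m^2 < σ^2/4 := by nlinarith
          nlinarith [mul_le_mul_of_nonneg_right hd (mul_pos hσ' hσ').le, mul_pos (mul_pos hσ' hσ') (mul_pos hσ' hσ'), mul_pos (mul_pos hm' hm') (mul_pos hm' hm'), mul_pos (mul_pos hσ' hσ') (mul_pos hm' hm')]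
        · have h1 : 0 < σ^2/4 - m^2 := by nlinarith
          nlinarith [mul_pos h1 h1]
        · nlinarith [mul_pos (mul_pos hm' (show (0:ℝ) < σ-2*m by linarith)) hp]

lemma master_all (m σ p : ℝ) (hm : 0 ≤ m) (hd : 4*p ≤ σ^2) (z : ℂ)
    (hz : z^4 + ((8*σ : ℝ):ℂ)*z^3 + ((4*σ^2+16*p-2*m^2 : ℝ):ℂ)*z^2
      + ((8*p*σ-8*σ*m^2 : ℝ):ℂ)*z + ((m^4-4*σ^2*m^2 : ℝ):ℂ) = 0) : z.im = 0 := by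
  rcases le_or_gt 0 σ with hs | hs
  · exact master m σ p hm hs hd z hz
  · have h2 : (-z).im = 0 := by
      refine master m (-σ) p hm (by linarith) (by nlinarith) (-z) ?_
      push_cast at hz ⊢
      linear_combination hz
    simpa using h2

end Aux

theorem stmt2 : Hyperbolic h4 e4 := by
  constructor
  · simp [h4, e4]
  · intro v z hz
    have hzE : (z + (v 0:ℂ))^2*(z + (v 1:ℂ))^2
        + 4*(2*z + (v 0:ℂ) + (v 1:ℂ) + (v 2:ℂ) + (v 3:ℂ))
          *(((v 2:ℂ)+(v 3:ℂ))*(z+(v 0:ℂ))*(z+(v 1:ℂ)) + (v 2:ℂ)*(v 3:ℂ)*(2*z+(v 0:ℂ)+(v 1:ℂ))) = 0 := by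
      have h := hz
      simp only [Polynomial.IsRoot.def, Polynomial.eval_map, univPoly, h4, e4] at h
      simp only [_root_.map_add, _root_.map_mul, _root_.map_pow, _root_.map_ofNat, MvPolynomial.aeval_X] at h
      simp only [Matrix.cons_val_zero, Matrix.cons_val_one, Matrix.head_cons,
        Matrix.cons_val_two, Matrix.tail_cons, Matrix.cons_val_three] at h
      simp only [Polynomial.eval₂_add, Polynomial.eval₂_mul, Polynomial.eval₂_pow,
        Polynomial.eval₂_C, Polynomial.eval₂_X, Polynomial.eval₂_ofNat] at h
      simp only [Complex.coe_algebraMap] at h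
      push_cast at h
      linear_combination h
    have hm : 0 ≤ |v 0 - v 1|/2 := by positivity
    have hd : 4*(v 2 * v 3) ≤ (v 2 + v 3)^2 := by nlinarith [sq_nonneg (v 2 - v 3)]
    have hmsq : (|v 0 - v 1|/2)^2 = ((v 0 - v 1)/2)^2 := by
      rw [div_pow, div_pow, sq_abs]
    have hmc : ((|v 0 - v 1|/2 : ℝ):ℂ)^2 = (((v 0 - v 1)/2 : ℝ):ℂ)^2 := by
      exact_mod_cast congrArg (Complex.ofReal ·) hmsq
    have hw : (z + (((v 0 + v 1)/2 : ℝ):ℂ))^4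
        + ((8*(v 2 + v 3) : ℝ):ℂ)*(z + (((v 0 + v 1)/2 : ℝ):ℂ))^3
        + ((4*(v 2 + v 3)^2+16*(v 2 * v 3)-2*(|v 0 - v 1|/2)^2 : ℝ):ℂ)*(z + (((v 0 + v 1)/2 : ℝ):ℂ))^2
        + ((8*(v 2 * v 3)*(v 2 + v 3)-8*(v 2 + v 3)*(|v 0 - v 1|/2)^2 : ℝ):ℂ)*(z + (((v 0 + v 1)/2 : ℝ):ℂ))
        + (((|v 0 - v 1|/2)^4-4*(v 2 + v 3)^2*(|v 0 - v 1|/2)^2 : ℝ):ℂ) = 0 := by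
      push_cast
      push_cast at hmc
      linear_combination hzE + (((|v 0 - v 1|:ℝ):ℂ)^2/4 + ((v 0:ℂ) - (v 1:ℂ))^2/4
        - 2*(z + ((v 0:ℂ) + (v 1:ℂ))/2)^2 - 8*((v 2:ℂ)+(v 3:ℂ))*(z + ((v 0:ℂ) + (v 1:ℂ))/2)
        - 4*((v 2:ℂ)+(v 3:ℂ))^2) * hmc
    have him := master_all (|v 0 - v 1|/2) (v 2 + v 3) (v 2 * v 3) hm hd
      (z + (((v 0 + v 1)/2 : ℝ):ℂ)) hw
    simpa using him
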